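/- Let N > 2 be a real number and define f : (1, N/2) → ℝ by f(ξ) = (Γ(N/2 - ξ)/Γ(N/2)) · ((N - (1+ξ))/2)^ξ. Then f is strictly increasing on (1, N/2). -/

import Mathlib

open Real Set Filter

noncomputable def LG : ℝ → ℝ := fun x => Real.log (Real.Gamma x)

noncomputable def psiAux : ℝ → ℝ := deriv LG

lemma diffLG {x : ℝ} (hx : 0 < x) : DifferentiableAt ℝ LG x := by
  have h : DifferentiableAt ℝ Real.Gamma x :=
    Real.differentiableAt_Gamma (fun m =>
      (((neg_nonpos.mpr (Nat.cast_nonneg m)).trans_lt hx).ne'))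
  exact h.log (Real.Gamma_pos_of_pos hx).ne'

lemma hasDerivAt_LG {x : ℝ} (hx : 0 < x) : HasDerivAt LG (psiAux x) x :=
  (diffLG hx).hasDerivAt

lemma psiAux_le_log {x : ℝ} (hx : 0 < x) : psiAux x ≤ Real.log x := by
  have hx1 : (0:ℝ) < x + 1 := by linarith
  have h := Real.convexOn_log_Gamma.deriv_le_slope (mem_Ioi.mpr hx) (mem_Ioi.mpr hx1)
    (lt_add_one x) (diffLG hx)
  rw [slope_def_field] at h
  have hG : Real.log (Real.Gamma (x + 1)) = Real.log x + Real.log (Real.Gamma x) := by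
    rw [Real.Gamma_add_one hx.ne', Real.log_mul hx.ne' (Real.Gamma_pos_of_pos hx).ne']
  have he : ((Real.log ∘ Real.Gamma) (x+1) - (Real.log ∘ Real.Gamma) x) / (x + 1 - x)
      = Real.log x := by
    rw [show x + 1 - x = (1:ℝ) by ring, div_one]
    simp only [Function.comp_apply, hG]
    ring
  rw [he] at h
  exact h

lemma psiAux_add_one {x : ℝ} (hx : 0 < x) : psiAux (x + 1) = psiAux x + 1 / x := by
  have hx1 : (0:ℝ) < x + 1 := by linarith
  have h1 : HasDerivAt (fun y => LG (y + 1)) (psiAux (x + 1) * 1) x :=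
    by have h := (hasDerivAt_LG hx1).comp x ((hasDerivAt_id x).add_const 1); exact h
  have h2 : HasDerivAt (fun y => Real.log y + LG y) (x⁻¹ + psiAux x) x :=
    (Real.hasDerivAt_log hx.ne').add (hasDerivAt_LG hx)
  have heq : (fun y => LG (y + 1)) =ᶠ[nhds x] (fun y => Real.log y + LG y) := by
    filter_upwards [IsOpen.mem_nhds isOpen_Ioi (mem_Ioi.mpr hx)] with y hy
    have hy' : (0:ℝ) < y := hy
    simp only [LG]
    rw [Real.Gamma_add_one hy'.ne', Real.log_mul hy'.ne' (Real.Gamma_pos_of_pos hy').ne']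
  have h3 : HasDerivAt (fun y => LG (y + 1)) (x⁻¹ + psiAux x) x :=
    h2.congr_of_eventuallyEq heq
  have := h1.unique h3
  rw [mul_one] at this
  rw [this, one_div]
  ring

lemma psiAux_add_nat {x : ℝ} (hx : 0 < x) (n : ℕ) :
    psiAux (x + n) = psiAux x + ∑ k ∈ Finset.range n, 1 / (x + k) := by
  induction n with
  | zero => simp
  | succ n ih =>
    have hxn : 0 < x + (n:ℝ) := by positivity
    have hcast : (x + ((n+1 : ℕ) : ℝ)) = (x + n) + 1 := by push_cast; ring
    rw [hcast, psiAux_add_one hxn, ih, Finset.sum_range_succ]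
    ring

/-- key elementary inequality: `log (1+u) ≤ u (2+u) / (2 (1+u))` for `u ≥ 0`. -/
lemma log_le_trap {u : ℝ} (hu : 0 ≤ u) :
    Real.log (1 + u) ≤ u * (2 + u) / (2 * (1 + u)) := by
  set q : ℝ → ℝ := fun w => w * (2 + w) / (2 * (1 + w)) - Real.log (1 + w) with hq
  have hderiv : ∀ v : ℝ, 0 < v → HasDerivAt q (v ^ 2 / (2 * (1 + v) ^ 2)) v := by
    intro v hv
    have h1v : (0:ℝ) < 1 + v := by linarith
    have hnum : HasDerivAt (fun w : ℝ => w * (2 + w)) (1 * (2 + v) + v * 1) v :=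
      (hasDerivAt_id v).mul ((hasDerivAt_id v).const_add 2)
    have hden : HasDerivAt (fun w : ℝ => 2 * (1 + w)) (2 * 1) v :=
      ((hasDerivAt_id v).const_add 1).const_mul 2
    have hdiv := hnum.div hden (by positivity)
    have hlog : HasDerivAt (fun w : ℝ => Real.log (1 + w)) (1 / (1 + v)) v :=
      HasDerivAt.log ((hasDerivAt_id v).const_add 1) h1v.ne'
    have := hdiv.sub hlog
    refine this.congr_deriv ?_
    field_simp
    ring
  have hmono : MonotoneOn q (Ici 0) := by
    apply monotoneOn_of_deriv_nonneg (convex_Ici 0)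
    · apply ContinuousOn.sub
      · apply ContinuousOn.div
        · fun_prop
        · fun_prop
        · intro w hw
          have : (0:ℝ) ≤ w := hw
          positivity
      · intro w hw
        have hw' : (0:ℝ) ≤ w := hw
        exact (ContinuousAt.log (by fun_prop) (by positivity)).continuousWithinAt
    · intro v hv
      rw [interior_Ici] at hv
      exact ((hderiv v hv).differentiableAt).differentiableWithinAt
    · intro v hv
      rw [interior_Ici] at hv
      rw [(hderiv v hv).deriv]
      positivity
  have h0 : q 0 = 0 := by simp [hq]
  have := hmono (mem_Ici.mpr le_rfl) (mem_Ici.mpr hu) hu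
  rw [h0] at this
  simp only [hq] at this
  linarith

/-- trapezoid inequality for log. -/
lemma trap' {a : ℝ} (ha : 0 < a) :
    Real.log (a + 1) - Real.log a ≤ 1 / (2 * a) + 1 / (2 * (a + 1)) := by
  have h := log_le_trap (u := 1 / a) (by positivity)
  have e1 : Real.log (1 + 1 / a) = Real.log (a + 1) - Real.log a := by
    rw [show (1:ℝ) + 1 / a = (a + 1) / a by field_simp, Real.log_div (by positivity) ha.ne']
  have e2 : (1 / a) * (2 + 1 / a) / (2 * (1 + 1 / a)) = 1 / (2 * a) + 1 / (2 * (a + 1)) := by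
    field_simp
    ring
  rw [e1, e2] at h
  exact h

lemma psiAux_le {x : ℝ} (hx : 0 < x) : psiAux x ≤ Real.log x - 1 / (2 * x) := by
  have key : ∀ n : ℕ, psiAux x ≤ Real.log x - 1 / (2 * x) + 1 / (2 * (x + n)) := by
    intro n
    have hxn : (0:ℝ) < x + n := by positivity
    have h1 := psiAux_add_nat hx n
    have h2 := psiAux_le_log hxn
    have h3 : Real.log (x + n) - Real.log x + (1 / (2 * x) - 1 / (2 * (x + n)))
        ≤ ∑ k ∈ Finset.range n, 1 / (x + k) := by
      have e1 := Finset.sum_range_sub (fun k : ℕ => Real.log (x + k)) n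
      have e2 := Finset.sum_range_sub' (fun k : ℕ => 1 / (2 * (x + k))) n
      have hsum : ∑ k ∈ Finset.range n,
          ((Real.log (x + ((k+1:ℕ):ℝ)) - Real.log (x + k))
            + (1 / (2 * (x + k)) - 1 / (2 * (x + ((k+1:ℕ):ℝ)))))
          ≤ ∑ k ∈ Finset.range n, 1 / (x + k) := by
        apply Finset.sum_le_sum
        intro k _
        have hk : (0:ℝ) < x + k := by positivity
        have ht := trap' hk
        push_cast
        have hrw : x + ((k:ℝ) + 1) = (x + k) + 1 := by ring
        rw [hrw]
        have h2a : 2 * (1 / (2 * (x + (k:ℝ)))) = 1 / (x + (k:ℝ)) := by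
          rw [eq_div_iff hk.ne']
          field_simp
        linarith
      rw [Finset.sum_add_distrib, e1, e2] at hsum
      simp only [Nat.cast_zero, add_zero] at hsum
      linarith
    linarith
  have hlim : Tendsto (fun n : ℕ => Real.log x - 1 / (2 * x) + 1 / (2 * (x + n)))
      atTop (nhds (Real.log x - 1 / (2 * x) + 0)) := by
    apply Tendsto.add tendsto_const_nhds
    have h2 : Tendsto (fun n : ℕ => 2 * (x + (n:ℝ))) atTop atTop := by
      apply Tendsto.const_mul_atTop two_pos
      exact tendsto_atTop_add_const_left _ x tendsto_natCast_atTop_atTop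
    have h3 := h2.inv_tendsto_atTop
    refine h3.congr fun n => ?_
    simp
  rw [add_zero] at hlim
  exact ge_of_tendsto' hlim key

lemma deriv_pos_aux (x b ξ : ℝ) (hx : 0 < x) (hb : 0 < b) (hξ1 : 1 < ξ)
    (hrel : 2 * (b - x) = ξ - 1) :
    0 < psiAux x * (-1) + (1 * Real.log b + ξ * (-(1/2) / b)) := by
  have hpsi := psiAux_le hx
  have hxb : x < b := by nlinarith
  have hlog : Real.log x - Real.log b ≤ x / b - 1 := by
    have h := Real.log_le_sub_one_of_pos (x := x / b) (by positivity)
    rw [Real.log_div hx.ne' hb.ne'] at h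
    linarith
  have harith : x / b - 1 - 1 / (2 * x) < ξ * (-(1/2) / b) := by
    have h1 : ξ * (-(1/2) / b) = -(ξ / (2 * b)) := by ring
    have hkey : 1 / (2 * b) < 1 / (2 * x) := by
      apply one_div_lt_one_div_of_lt (by positivity) (by linarith)
    have he1 : x / b + ξ / (2 * b) = 1 + 1 / (2 * b) := by
      field_simp
      linarith
    rw [h1]
    have hfin : x / b - 1 - 1 / (2 * x) + ξ / (2 * b) < 0 := by
      have h2 : x / b - 1 - 1 / (2 * x) + ξ / (2 * b)
          = (x / b + ξ / (2 * b)) - 1 - 1 / (2 * x) := by ring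
      rw [h2, he1]
      linarith
    linarith
  linarith [hpsi, hlog, harith]

theorem stmt_4 (N : ℝ) (hN : 2 < N)
    (f : ℝ → ℝ)
    (hf : ∀ ξ ∈ Set.Ioo 1 (N / 2),
      f ξ = (Real.Gamma (N / 2 - ξ) / Real.Gamma (N / 2)) * ((N - (1 + ξ)) / 2) ^ ξ) :
    StrictMonoOn f (Set.Ioo 1 (N / 2)) := by
  set G : ℝ → ℝ := fun ξ => Real.log (Real.Gamma (N / 2 - ξ))
      + ξ * Real.log ((N - (1 + ξ)) / 2) - Real.log (Real.Gamma (N / 2)) with hGdef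
  -- basic positivity facts on the interval
  have hbnd : ∀ ξ ∈ Set.Ioo (1:ℝ) (N / 2), 0 < N / 2 - ξ ∧ 0 < (N - (1 + ξ)) / 2 := by
    rintro ξ ⟨h1, h2⟩
    constructor <;> [linarith; linarith]
  -- derivative of G
  have hG : ∀ ξ ∈ Set.Ioo (1:ℝ) (N / 2),
      HasDerivAt G (psiAux (N / 2 - ξ) * (-1)
        + (1 * Real.log ((N - (1 + ξ)) / 2) + ξ * (-(1/2) / ((N - (1 + ξ)) / 2)))) ξ := by
    intro ξ hξ
    obtain ⟨hx, hb⟩ := hbnd ξ hξ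
    have hinner : HasDerivAt (fun t : ℝ => N / 2 - t) (-1) ξ := by
      simpa using (hasDerivAt_id ξ).const_sub (N / 2)
    have h2 : HasDerivAt (fun t : ℝ => LG (N / 2 - t)) (psiAux (N / 2 - ξ) * (-1)) ξ :=
      (hasDerivAt_LG hx).comp ξ hinner
    have h3 : HasDerivAt (fun t : ℝ => (N - (1 + t)) / 2) (-(1/2)) ξ := by
      have : HasDerivAt (fun t : ℝ => N - (1 + t)) (-1) ξ := by
        simpa using ((hasDerivAt_id ξ).const_add 1).const_sub N
      simpa [neg_div] using this.div_const 2
    have h4 : HasDerivAt (fun t : ℝ => Real.log ((N - (1 + t)) / 2))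
        (-(1/2) / ((N - (1 + ξ)) / 2)) ξ := h3.log hb.ne'
    have h5 : HasDerivAt (fun t : ℝ => t * Real.log ((N - (1 + t)) / 2))
        (1 * Real.log ((N - (1 + ξ)) / 2) + ξ * (-(1/2) / ((N - (1 + ξ)) / 2))) ξ :=
      (hasDerivAt_id ξ).mul h4
    exact (h2.add h5).sub_const _
  -- strict monotonicity of G
  have hmono : StrictMonoOn G (Set.Ioo 1 (N / 2)) := by
    apply strictMonoOn_of_deriv_pos (convex_Ioo _ _)
    · intro ξ hξ
      exact (hG ξ hξ).differentiableAt.continuousAt.continuousWithinAt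
    · rw [interior_Ioo]
      intro ξ hξ
      rw [(hG ξ hξ).deriv]
      obtain ⟨hx, hb⟩ := hbnd ξ hξ
      obtain ⟨hξ1, hξ2⟩ := hξ
      exact deriv_pos_aux (N / 2 - ξ) ((N - (1 + ξ)) / 2) ξ hx hb hξ1 (by ring)
  -- transfer to f
  have hFexp : ∀ ξ ∈ Set.Ioo (1:ℝ) (N / 2),
      (Real.Gamma (N / 2 - ξ) / Real.Gamma (N / 2)) * ((N - (1 + ξ)) / 2) ^ ξ
        = Real.exp (G ξ) := by
    intro ξ hξ
    obtain ⟨hx, hb⟩ := hbnd ξ hξ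
    have hΓx : 0 < Real.Gamma (N / 2 - ξ) := Real.Gamma_pos_of_pos hx
    have hΓN : 0 < Real.Gamma (N / 2) := Real.Gamma_pos_of_pos (by linarith)
    rw [hGdef]
    simp only []
    rw [Real.exp_sub, Real.exp_add, Real.exp_log hΓx, Real.exp_log hΓN,
      Real.rpow_def_of_pos hb, mul_comm (Real.log ((N - (1 + ξ)) / 2)) ξ]
    ring
  intro ξ₁ h₁ ξ₂ h₂ hlt
  rw [hf ξ₁ h₁, hf ξ₂ h₂, hFexp ξ₁ h₁, hFexp ξ₂ h₂]
  exact Real.exp_lt_exp.mpr (hmono h₁ h₂ hlt)
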